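/- Let k be a field and f = a_n x^n + … + a_0 ∈ k[x] with a_n ≠ 0 and a_0 ≠ 0. Let r_1, …, r_s ∈ k̄ be the distinct roots of f with multiplicities m_1, …, m_s. Then tol(f) = tol(f*) if and only if ∏_{1≤i<j≤s} (r_i r_j)^{2 m_i m_j} = (a_0/a_n)^{2n−2}. -/

import Mathlib

open Polynomial
open scoped Classical

/-- The tolerant of a polynomial `f` over a field `K` (intended: `K` an algebraic closure and
`f` the image of a polynomial over a subfield): writing `f = a_n ∏ (X - r_i)^{m_i}` with
`r_1, …, r_s` distinct, `tol f = a_n^{2n-2} ∏_{i<j} (r_i - r_j)^{2 m_i m_j}`.  The product is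
taken over unordered pairs of distinct roots; this is well defined since the exponents are even. -/
noncomputable def tol {K : Type*} [Field K] (f : K[X]) : K :=
  f.leadingCoeff ^ (2 * (f.natDegree : ℤ) - 2) *
    ∏ p ∈ f.roots.toFinset.sym2.filter (fun p => ¬ p.IsDiag),
      Sym2.lift ⟨fun a b => ((a - b) ^ 2) ^ (f.rootMultiplicity a * f.rootMultiplicity b),
        fun a b => by
          dsimp only
          rw [mul_comm (rootMultiplicity a f), show (a - b) ^ 2 = (b - a) ^ 2 by ring]⟩ p

section Key
variable {K : Type*} [Field K]

lemma prod_ne_zero' {s : ℕ} (r : Fin s → K) (m : Fin s → ℕ) :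
    (∏ i, (X - C (r i)) ^ m i) ≠ 0 :=
  Finset.prod_ne_zero_iff.mpr fun i _ => pow_ne_zero _ (X_sub_C_ne_zero _)

lemma natDegree_key (c : K) (hc : c ≠ 0) {s : ℕ} (r : Fin s → K) (m : Fin s → ℕ) :
    (C c * ∏ i, (X - C (r i)) ^ m i).natDegree = ∑ i, m i := by
  rw [natDegree_C_mul hc, natDegree_prod]
  · simp [natDegree_pow]
  · intro i _; exact pow_ne_zero _ (X_sub_C_ne_zero _)

lemma leadingCoeff_key (c : K) {s : ℕ} (r : Fin s → K) (m : Fin s → ℕ) :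
    (C c * ∏ i, (X - C (r i)) ^ m i).leadingCoeff = c := by
  rw [leadingCoeff_mul, leadingCoeff_C,
    (monic_prod_of_monic _ _ fun i _ => (monic_X_sub_C _).pow _).leadingCoeff, mul_one]

lemma roots_key (c : K) (hc : c ≠ 0) {s : ℕ} (r : Fin s → K) (m : Fin s → ℕ) :
    (C c * ∏ i, (X - C (r i)) ^ m i).roots
      = Finset.univ.val.bind (fun i => m i • {r i}) := by
  rw [roots_C_mul _ hc, roots_prod _ _ (prod_ne_zero' r m)]
  simp [roots_pow]

lemma rootMultiplicity_key (c : K) (hc : c ≠ 0) {s : ℕ} (r : Fin s → K) (m : Fin s → ℕ)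
    (hr : Function.Injective r) (j : Fin s) :
    rootMultiplicity (r j) (C c * ∏ i, (X - C (r i)) ^ m i) = m j := by
  rw [← count_roots, roots_key c hc r m, Multiset.count_bind]
  have : (Finset.univ.val.map fun i => (m i • ({r i} : Multiset K)).count (r j)).sum
      = ∑ i, (m i • ({r i} : Multiset K)).count (r j) := rfl
  rw [this, Finset.sum_eq_single j]
  · simp
  · intro i _ hij
    simp only [Multiset.count_nsmul, Multiset.count_singleton]
    rw [if_neg (fun h => absurd (hr h.symm) hij), mul_zero]
  · simp

lemma toFinset_key (c : K) (hc : c ≠ 0) {s : ℕ} (r : Fin s → K) (m : Fin s → ℕ)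
    (hm : ∀ i, 0 < m i) :
    (C c * ∏ i, (X - C (r i)) ^ m i).roots.toFinset = Finset.univ.image r := by
  ext a
  simp only [Multiset.mem_toFinset, roots_key c hc r m, Multiset.mem_bind, Finset.mem_image,
    Finset.mem_val, Finset.mem_univ, true_and]
  constructor
  · rintro ⟨i, hi⟩
    rw [Multiset.mem_nsmul_of_ne_zero ((hm i).ne'), Multiset.mem_singleton] at hi
    exact ⟨i, hi.symm⟩
  · rintro ⟨i, rfl⟩
    exact ⟨i, by rw [Multiset.mem_nsmul_of_ne_zero (hm i).ne']; simp⟩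

lemma tol_key (c : K) (hc : c ≠ 0) {s : ℕ} (r : Fin s → K) (m : Fin s → ℕ)
    (hr : Function.Injective r) (hm : ∀ i, 0 < m i) :
    tol (C c * ∏ i, (X - C (r i)) ^ m i)
      = c ^ (2 * ((∑ i, m i : ℕ) : ℤ) - 2) *
        ∏ ij ∈ Finset.univ.filter (fun ij : Fin s × Fin s => ij.1 < ij.2),
          ((r ij.1 - r ij.2) ^ 2) ^ (m ij.1 * m ij.2) := by
  rw [tol, leadingCoeff_key, natDegree_key c hc, toFinset_key c hc r m hm]
  congr 1
  symm
  refine (Finset.prod_bij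
    (fun (ij : Fin s × Fin s) _ => s(r ij.1, r ij.2)) ?_ ?_ ?_ ?_)
  · rintro ⟨i, j⟩ hij
    rw [Finset.mem_filter] at hij
    simp only [Finset.mem_filter, Finset.mk_mem_sym2_iff, Sym2.isDiag_iff_proj_eq]
    exact ⟨⟨Finset.mem_image_of_mem r (Finset.mem_univ i),
      Finset.mem_image_of_mem r (Finset.mem_univ j)⟩,
      fun h => (hij.2.ne (hr h)).elim⟩
  · rintro ⟨i, j⟩ hij ⟨i', j'⟩ hij' h
    rw [Finset.mem_filter] at hij hij'
    rw [Sym2.eq_iff] at h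
    rcases h with h | h
    · simp only [Prod.mk.injEq, Prod.ext_iff] at h ⊢
      exact ⟨hr h.1, hr h.2⟩
    · simp only [Prod.swap_prod_mk, Prod.mk.injEq] at h
      exact absurd ((hr h.1) ▸ (hr h.2) ▸ hij'.2) (lt_asymm hij.2)
  · intro p hp
    rw [Finset.mem_filter] at hp
    induction p with
    | _ a b =>
      rw [Finset.mk_mem_sym2_iff] at hp
      obtain ⟨⟨ha, hb⟩, hd⟩ := hp
      rw [Finset.mem_image] at ha hb
      obtain ⟨i, -, rfl⟩ := ha
      obtain ⟨j, -, rfl⟩ := hb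
      have hij : i ≠ j := fun h => hd (by rw [h, Sym2.isDiag_iff_proj_eq])
      rcases hij.lt_or_gt with h | h
      · exact ⟨(i, j), Finset.mem_filter.mpr ⟨Finset.mem_univ _, h⟩, rfl⟩
      · exact ⟨(j, i), Finset.mem_filter.mpr ⟨Finset.mem_univ _, h⟩, Sym2.eq_swap⟩
  · rintro ⟨i, j⟩ hij
    rw [Sym2.lift_mk]
    simp only
    rw [rootMultiplicity_key c hc r m hr, rootMultiplicity_key c hc r m hr]

lemma reverse_prod' {ι : Type*} (t : Finset ι) (g : ι → K[X]) :
    (∏ i ∈ t, g i).reverse = ∏ i ∈ t, (g i).reverse := by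
  classical
  induction t using Finset.cons_induction with
  | empty => simpa using reverse_C (1 : K)
  | cons a t ha ih => rw [Finset.prod_cons, reverse_mul_of_domain, ih, Finset.prod_cons]

lemma reverse_pow' (p : K[X]) (n : ℕ) : (p ^ n).reverse = p.reverse ^ n := by
  induction n with
  | zero => simpa using reverse_C (1 : K)
  | succ n ih => rw [pow_succ, reverse_mul_of_domain, ih, pow_succ]

lemma reverse_X_sub_C' (a : K) (ha : a ≠ 0) :
    (X - C a).reverse = -C a * (X - C a⁻¹) := by
  have h1 : (X - C a : K[X]) = C 1 * X ^ 1 + C (-a) * X ^ 0 := by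
    simp only [map_one, one_mul, pow_one, pow_zero, mul_one, map_neg]
    ring
  rw [reverse, natDegree_X_sub_C, h1, reflect_add, reflect_C_mul_X_pow, reflect_C_mul_X_pow]
  have e1 : revAt 1 1 = 0 := by simp
  have e0 : revAt 1 0 = 1 := by simp
  rw [e1, e0]
  have h2 : (C a : K[X]) * C a⁻¹ = 1 := by rw [← C_mul, mul_inv_cancel₀ ha, map_one]
  simp only [map_neg, map_one]
  linear_combination -h2

end Key

/-- Inversion criterion: for `f = a_n x^n + … + a_0` with `a_n, a_0 ≠ 0`, with distinct roots
`r_1, …, r_s` of multiplicities `m_1, …, m_s` in the algebraic closure, one has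
`tol f = tol f*` (where `f* = x^{deg f} f(1/x)` is the reciprocal polynomial, i.e. `f.reverse`)
if and only if `∏_{i<j} (r_i r_j)^{2 m_i m_j} = (a_0 / a_n)^{2n-2}`. -/
theorem tol_reverse_iff {k : Type*} [Field k] (f : k[X]) (hf : f ≠ 0) (h0 : f.coeff 0 ≠ 0)
    (s : ℕ) (r : Fin s → AlgebraicClosure k) (m : Fin s → ℕ)
    (hr : Function.Injective r) (hm : ∀ i, 0 < m i)
    (hfact : f.map (algebraMap k (AlgebraicClosure k)) =
      C (algebraMap k (AlgebraicClosure k) f.leadingCoeff) * ∏ i, (X - C (r i)) ^ m i) :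
    tol (f.map (algebraMap k (AlgebraicClosure k))) =
        tol (f.reverse.map (algebraMap k (AlgebraicClosure k))) ↔
      ∏ ij ∈ Finset.univ.filter (fun ij : Fin s × Fin s => ij.1 < ij.2),
          (r ij.1 * r ij.2) ^ (2 * m ij.1 * m ij.2) =
        (algebraMap k (AlgebraicClosure k) (f.coeff 0) /
            algebraMap k (AlgebraicClosure k) f.leadingCoeff) ^ (2 * (f.natDegree : ℤ) - 2) := by
  have hinj : Function.Injective (algebraMap k (AlgebraicClosure k)) :=
    RingHom.injective _
  set A := algebraMap k (AlgebraicClosure k) f.leadingCoeff with hA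
  set B := algebraMap k (AlgebraicClosure k) (f.coeff 0) with hB
  have hA0 : A ≠ 0 := fun h =>
    hf (leadingCoeff_eq_zero.mp (hinj (h.trans (map_zero _).symm)))
  have hB0 : B ≠ 0 := fun h => h0 (hinj (h.trans (map_zero _).symm))
  -- roots are nonzero
  have hr0 : ∀ i, r i ≠ 0 := by
    intro i hri
    apply hB0
    rw [hB, ← coeff_map, coeff_zero_eq_eval_zero, hfact, eval_mul, eval_prod,
      Finset.prod_eq_zero (Finset.mem_univ i) (by simp [hri, eval_pow, (hm i).ne']),
      mul_zero]
  -- degree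
  have hn : ∑ i, m i = f.natDegree := by
    have h := congrArg natDegree hfact
    rw [natDegree_map, natDegree_key A hA0] at h
    exact h.symm
  -- the reverse factorization
  have hc0 : B = A * ∏ i, (-(r i)) ^ m i := by
    have h := congrArg (eval 0) hfact
    rw [← coeff_zero_eq_eval_zero, coeff_map] at h
    rw [hB]
    simpa [eval_prod, eval_pow, zero_sub] using h
  have hrev : f.reverse.map (algebraMap k (AlgebraicClosure k)) = (f.map (algebraMap k (AlgebraicClosure k))).reverse := by
    rw [reverse, reverse, natDegree_map, reflect_map]
  have hG : f.reverse.map (algebraMap k (AlgebraicClosure k)) = C B * ∏ i, (X - C (r i)⁻¹) ^ m i := by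
    rw [hrev, hfact, reverse_mul_of_domain, reverse_C, reverse_prod']
    have hterm : ∀ i ∈ Finset.univ, ((X - C (r i)) ^ m i).reverse
        = C ((-(r i)) ^ m i) * (X - C (r i)⁻¹) ^ m i := by
      intro i _
      rw [reverse_pow', reverse_X_sub_C' _ (hr0 i), mul_pow, ← C_neg, ← C_pow]
    have hCprod : (∏ x : Fin s, (C ((-r x) ^ m x) : Polynomial (AlgebraicClosure k)))
        = C (∏ x : Fin s, (-r x) ^ m x) := (map_prod (Polynomial.C : AlgebraicClosure k →+* Polynomial (AlgebraicClosure k)) (fun x => (-r x) ^ m x) Finset.univ).symm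
    rw [Finset.prod_congr rfl hterm, Finset.prod_mul_distrib, hCprod, ← mul_assoc,
      ← C_mul, ← hc0]
  have hr' : Function.Injective (fun i => (r i)⁻¹) := fun a b h => hr (inv_injective h)
  rw [hfact, hG, tol_key A hA0 r m hr hm, tol_key B hB0 _ m hr' hm, hn]
  -- abbreviations
  set S := Finset.univ.filter (fun ij : Fin s × Fin s => ij.1 < ij.2) with hS
  set e : ℤ := 2 * (f.natDegree : ℤ) - 2 with he
  set P := ∏ ij ∈ S, ((r ij.1 - r ij.2) ^ 2) ^ (m ij.1 * m ij.2) with hP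
  set Q := ∏ ij ∈ S, (r ij.1 * r ij.2) ^ (2 * m ij.1 * m ij.2) with hQ
  have hne : ∀ ij ∈ S, r ij.1 ≠ r ij.2 := by
    intro ij hij h
    exact absurd (hr h) (Finset.mem_filter.mp hij).2.ne
  have hPne : P ≠ 0 := Finset.prod_ne_zero_iff.mpr fun ij hij =>
    pow_ne_zero _ (pow_ne_zero _ (sub_ne_zero.mpr (hne ij hij)))
  have hQne : Q ≠ 0 := Finset.prod_ne_zero_iff.mpr fun ij _ =>
    pow_ne_zero _ (mul_ne_zero (hr0 _) (hr0 _))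
  have hP' : (∏ ij ∈ S, (((fun i => (r i)⁻¹) ij.1 - (fun i => (r i)⁻¹) ij.2) ^ 2)
        ^ (m ij.1 * m ij.2)) = P * Q⁻¹ := by
    rw [hP, hQ, ← Finset.prod_inv_distrib, ← Finset.prod_mul_distrib]
    refine Finset.prod_congr rfl fun ij hij => ?_
    have h1 := hr0 ij.1
    have h2 := hr0 ij.2
    rw [mul_assoc 2, pow_mul (r ij.1 * r ij.2) 2, ← inv_pow, ← mul_pow]
    congr 1
    field_simp
    ring
  rw [hP']
  have hAe : A ^ e ≠ 0 := zpow_ne_zero _ hA0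
  calc A ^ e * P = B ^ e * (P * Q⁻¹)
        ↔ A ^ e * P * Q = B ^ e * (P * Q⁻¹) * Q := (mul_left_inj' hQne).symm
    _ ↔ Q * A ^ e * P = B ^ e * P := by
        rw [show B ^ e * (P * Q⁻¹) * Q = B ^ e * P by field_simp,
          show A ^ e * P * Q = Q * A ^ e * P by ring]
    _ ↔ Q * A ^ e = B ^ e := mul_left_inj' hPne
    _ ↔ Q = B ^ e / A ^ e := (eq_div_iff hAe).symm
    _ ↔ Q = (B / A) ^ e := by rw [div_zpow]
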